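/- arXiv:1312.1597 — 2 statements merged into one kernel-verified Lean document; each statement's English description precedes it below -/
import Mathlib

section
/- The discriminant of the quadratic (in c) polynomial M(c,s) = 243c² + (−900s − 778 + 540s² − 1080s³)·c + 823 + 1284s + 480s² + 480s³ + 2700s⁴ − 1296s⁵ + 1296s⁶ equals −16·(18s² − 6s + 23)³, which is strictly negative for all real s. -/
/-- The discriminant (in `c`) of `M(c,s)` equals `−16(18s² − 6s + 23)³`, which is
strictly negative for all real `s`. -/
theorem discriminant_M (s : ℝ) :
    (-900*s - 778 + 540*s^2 - 1080*s^3)^2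
        - 4 * 243 * (823 + 1284*s + 480*s^2 + 480*s^3 + 2700*s^4 - 1296*s^5 + 1296*s^6)
      = -16 * (18*s^2 - 6*s + 23)^3 ∧
    -16 * (18*s^2 - 6*s + 23)^3 < 0 := by
  constructor
  · ring
  · have h : (0:ℝ) < 18*s^2 - 6*s + 23 := by nlinarith [sq_nonneg (6*s - 1)]
    nlinarith [pow_pos h 3]
end

section
/- For every fixed s ∈ ℝ, the cubic polynomial in c, N(c,s) = 3c³ + (−42s + 37)c² + (−476s + 588s² + 3397)c + 6076s² − 8232s³ − 8666s − 2125, has exactly one real root. -/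
/-- For every fixed `s`, the cubic in `c`,
`N(c,s) = 3c³ + (−42s + 37)c² + (−476s + 588s² + 3397)c + 6076s² − 8232s³ − 8666s − 2125`,
has exactly one real root. -/
theorem N_unique_root (s : ℝ) :
    ∃! c : ℝ,
      3*c^3 + (-42*s + 37)*c^2 + (-476*s + 588*s^2 + 3397)*c
        + 6076*s^2 - 8232*s^3 - 8666*s - 2125 = 0 := by
  have hAd : ∀ x : ℝ, HasDerivAt
      (fun c : ℝ => 3*c^3 + (-42*s + 37)*c^2 + (-476*s + 588*s^2 + 3397)*c
        + 6076*s^2 - 8232*s^3 - 8666*s - 2125)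
      (9*x^2 + 2*(-42*s + 37)*x + (-476*s + 588*s^2 + 3397)) x := by
    intro x
    have h1 : HasDerivAt
        (fun c : ℝ => 3*c^3 + (-42*s + 37)*c^2 + (-476*s + 588*s^2 + 3397)*c
          + 6076*s^2 - 8232*s^3 - 8666*s - 2125)
        ((3*(3*x^2) + (-42*s + 37)*(2*x^1) + (-476*s + 588*s^2 + 3397)*1 + 0) - 0 - 0 - 0) x := by
      exact (((((((hasDerivAt_pow 3 x).const_mul 3).add
        ((hasDerivAt_pow 2 x).const_mul (-42*s + 37))).add
        ((hasDerivAt_id x).const_mul (-476*s + 588*s^2 + 3397))).add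
        (hasDerivAt_const x (6076*s^2))).sub (hasDerivAt_const x (8232*s^3))).sub
        (hasDerivAt_const x (8666*s))).sub (hasDerivAt_const x 2125)
    convert h1 using 1
    ring
  have hpos : ∀ x : ℝ, 0 < 9*x^2 + 2*(-42*s + 37)*x + (-476*s + 588*s^2 + 3397) := by
    intro x
    nlinarith [sq_nonneg (9*x + (-42*s + 37)), sq_nonneg (42*s - 17), sq_nonneg s,
      sq_nonneg (s - 1)]
  have hmono : StrictMono
      (fun c : ℝ => 3*c^3 + (-42*s + 37)*c^2 + (-476*s + 588*s^2 + 3397)*c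
        + 6076*s^2 - 8232*s^3 - 8666*s - 2125) :=
    strictMono_of_hasDerivAt_pos hAd hpos
  have hcont : Continuous
      (fun c : ℝ => 3*c^3 + (-42*s + 37)*c^2 + (-476*s + 588*s^2 + 3397)*c
        + 6076*s^2 - 8232*s^3 - 8666*s - 2125) := by
    fun_prop
  -- explicit bounds
  set b : ℝ := 1 + |(-42*s + 37)| + |6076*s^2 - 8232*s^3 - 8666*s - 2125| with hb
  have habsA : -|(-42*s + 37)| ≤ -42*s + 37 := neg_abs_le _
  have habsA' : -42*s + 37 ≤ |(-42*s + 37)| := le_abs_self _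
  have habsD : -|6076*s^2 - 8232*s^3 - 8666*s - 2125| ≤ 6076*s^2 - 8232*s^3 - 8666*s - 2125 :=
    neg_abs_le _
  have habsD' : 6076*s^2 - 8232*s^3 - 8666*s - 2125 ≤ |6076*s^2 - 8232*s^3 - 8666*s - 2125| :=
    le_abs_self _
  have hAnn : 0 ≤ |(-42*s + 37)| := abs_nonneg _
  have hDnn : 0 ≤ |6076*s^2 - 8232*s^3 - 8666*s - 2125| := abs_nonneg _
  have hb1 : (1:ℝ) ≤ b := by rw [hb]; linarith
  have hbA : |(-42*s + 37)| ≤ b := by rw [hb]; linarith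
  have hB1 : (1:ℝ) ≤ -476*s + 588*s^2 + 3397 := by nlinarith [sq_nonneg (42*s - 17)]
  have hfb : 0 < 3*b^3 + (-42*s + 37)*b^2 + (-476*s + 588*s^2 + 3397)*b
      + 6076*s^2 - 8232*s^3 - 8666*s - 2125 := by
    have h1 : -|(-42*s + 37)| * b^2 ≤ (-42*s + 37) * b^2 :=
      mul_le_mul_of_nonneg_right habsA (sq_nonneg b)
    have h2 : 1 * b ≤ (-476*s + 588*s^2 + 3397) * b :=
      mul_le_mul_of_nonneg_right hB1 (by linarith)
    nlinarith [sq_nonneg b, mul_le_mul_of_nonneg_right hbA (sq_nonneg b),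
      mul_pos (mul_pos (lt_of_lt_of_le one_pos hb1) (lt_of_lt_of_le one_pos hb1))
        (lt_of_lt_of_le one_pos hb1)]
  have hfnb : 3*(-b)^3 + (-42*s + 37)*(-b)^2 + (-476*s + 588*s^2 + 3397)*(-b)
      + 6076*s^2 - 8232*s^3 - 8666*s - 2125 < 0 := by
    have h1 : (-42*s + 37) * b^2 ≤ |(-42*s + 37)| * b^2 :=
      mul_le_mul_of_nonneg_right habsA' (sq_nonneg b)
    have h2 : 1 * b ≤ (-476*s + 588*s^2 + 3397) * b :=
      mul_le_mul_of_nonneg_right hB1 (by linarith)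
    nlinarith [sq_nonneg b, mul_le_mul_of_nonneg_right hbA (sq_nonneg b),
      mul_pos (mul_pos (lt_of_lt_of_le one_pos hb1) (lt_of_lt_of_le one_pos hb1))
        (lt_of_lt_of_le one_pos hb1)]
  have hmem : (0:ℝ) ∈ Set.Icc
      (3*(-b)^3 + (-42*s + 37)*(-b)^2 + (-476*s + 588*s^2 + 3397)*(-b)
        + 6076*s^2 - 8232*s^3 - 8666*s - 2125)
      (3*b^3 + (-42*s + 37)*b^2 + (-476*s + 588*s^2 + 3397)*b
        + 6076*s^2 - 8232*s^3 - 8666*s - 2125) :=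
    ⟨le_of_lt hfnb, le_of_lt hfb⟩
  have hIVT := intermediate_value_Icc (by linarith : -b ≤ b) hcont.continuousOn
  obtain ⟨c, _, hc⟩ := hIVT hmem
  exact ⟨c, hc, fun y hy => hmono.injective (by simpa using hy.trans hc.symm)⟩
end
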